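/- arXiv:1605.05089 — 2 statements merged into one kernel-verified Lean document; each statement's English description precedes it below -/
import Mathlib

section
/- Let a ∈ R and x ∈ F_a. Then there exists a unit u ∈ Rˣ such that x·z = u·z for every z ∈ S_a. Moreover, if u, u′ ∈ Rˣ both satisfy x·z = u·z and x·z = u′·z for every z ∈ S_a, then χ(u) = χ(u′) for every character χ ∈ Σ_a. -/
lemma exists_idem_pow {R : Type} [Monoid R] [Fintype R] (x : R) :
    ∃ n : ℕ, 1 ≤ n ∧ x ^ (n + n) = x ^ n := by
  obtain ⟨i, j, hne, hij⟩ := Finite.exists_ne_map_eq_of_infinite (fun k : ℕ => x ^ k)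
  wlog hlt : i < j generalizing i j
  · exact this j i hne.symm hij.symm (by omega)
  set d := j - i with hd
  have hd1 : 1 ≤ d := by omega
  have hper : x ^ (i + d) = x ^ i := by
    have : i + d = j := by omega
    rw [this]; exact hij.symm
  have claim : ∀ k m, i ≤ m → x ^ (m + k * d) = x ^ m := by
    intro k
    induction k with
    | zero => intro m _; simp
    | succ k ih =>
      intro m hm
      have hexp : (k + 1) * d = k * d + d := by ring
      have h1 : m + (k + 1) * d = (m + k * d - i) + (i + d) := by omega
      have h2 : (m + k * d - i) + i = m + k * d := by omega
      rw [h1, pow_add, hper, ← pow_add, h2, ih m hm]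
  refine ⟨(i + 1) * d, by nlinarith, ?_⟩
  exact claim (i + 1) ((i + 1) * d) (by nlinarith)

/-- The annihilator ideal `ann(a) = {x ∈ R : x·a = 0}`. -/
def annId {R : Type} [CommRing R] (a : R) : Ideal R where
  carrier := {x | x * a = 0}
  add_mem' := by
    intro x y hx hy
    simp only [Set.mem_setOf_eq] at *
    rw [add_mul, hx, hy, add_zero]
  zero_mem' := by simp
  smul_mem' := by
    intro c x hx
    simp only [smul_eq_mul, Set.mem_setOf_eq] at *
    rw [mul_assoc, hx, mul_zero]

lemma mem_annId {R : Type} [CommRing R] {a y : R} : y ∈ annId a ↔ y * a = 0 := Iff.rfl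

/-- For `x ∈ F_a` there is a unit `u ∈ Rˣ` acting like `x` on `S_a`, and such a
unit is unique up to the value of any character `χ ∈ Σ_a`. -/
theorem stmt5 (R : Type) [CommRing R] [Fintype R] (a x : R)
    (hx : IsUnit (Ideal.Quotient.mk (annId a) x)) :
    (∃ u : Rˣ, ∀ z : R, Ideal.span ({z} : Set R) = Ideal.span {a} →
        x * z = (u : R) * z) ∧
    (∀ u u' : Rˣ,
      (∀ z : R, Ideal.span ({z} : Set R) = Ideal.span {a} → x * z = (u : R) * z) →
      (∀ z : R, Ideal.span ({z} : Set R) = Ideal.span {a} → x * z = (u' : R) * z) →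
      ∀ χ : Rˣ →* ℂˣ, (∀ v : Rˣ, ((v : R) - 1) ∈ annId a → χ v = 1) →
        χ u = χ u') := by
  constructor
  · -- existence
    obtain ⟨n, hn1, hidem⟩ := exists_idem_pow x
    set e := x ^ n with hedef
    have he : e * e = e := by rw [hedef, ← pow_add, hidem]
    -- `mk e` is an idempotent unit of the quotient, hence equals 1
    have hue : IsUnit (Ideal.Quotient.mk (annId a) e) := by
      rw [hedef, map_pow]; exact hx.pow n
    have hmke : Ideal.Quotient.mk (annId a) e = 1 := by
      have h2 : Ideal.Quotient.mk (annId a) e * Ideal.Quotient.mk (annId a) e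
          = Ideal.Quotient.mk (annId a) e * 1 := by
        rw [← map_mul, he, mul_one]
      exact hue.mul_left_cancel h2
    -- hence e * a = a
    have hea : e * a = a := by
      have : e - 1 ∈ annId a := by
        rw [← Ideal.Quotient.eq_zero_iff_mem, map_sub, hmke, map_one, sub_self]
      have h0 : (e - 1) * a = 0 := this
      linear_combination h0
    -- the unit u = x*e + (1-e)
    have hxe : x * x ^ (n - 1) = e := by
      rw [hedef, ← pow_succ']
      congr 1
      omega
    have key : (x * e + (1 - e)) * (x ^ (n - 1) * e + (1 - e)) = 1 := by
      linear_combination (e * e) * hxe + (e + 2 - x - x ^ (n - 1)) * he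
    refine ⟨⟨x * e + (1 - e), x ^ (n - 1) * e + (1 - e), key, by rw [mul_comm]; exact key⟩,
      ?_⟩
    intro z hz
    have hzmem : z ∈ Ideal.span ({a} : Set R) := by
      rw [← hz]; exact Ideal.mem_span_singleton_self z
    obtain ⟨r, hr⟩ := Ideal.mem_span_singleton'.mp hzmem
    have hub : (x * e + (1 - e)) * a = x * a := by linear_combination x * hea - hea
    show x * z = (x * e + (1 - e)) * z
    rw [← hr]
    calc x * (r * a) = r * (x * a) := by ring
      _ = r * ((x * e + (1 - e)) * a) := by rw [hub]
      _ = (x * e + (1 - e)) * (r * a) := by ring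
  · -- uniqueness up to characters
    intro u u' hu hu' χ hχ
    have ha : x * a = (u : R) * a := hu a rfl
    have ha' : x * a = (u' : R) * a := hu' a rfl
    have hv : (((u * u'⁻¹ : Rˣ) : R) - 1) ∈ annId a := by
      rw [mem_annId, sub_mul, one_mul, Units.val_mul, mul_assoc]
      have : ((u'⁻¹ : Rˣ) : R) * a = ((u'⁻¹ : Rˣ) : R) * a := rfl
      have key : (u : R) * (((u'⁻¹ : Rˣ) : R) * a) = a := by
        calc (u : R) * (((u'⁻¹ : Rˣ) : R) * a)
            = ((u'⁻¹ : Rˣ) : R) * ((u : R) * a) := by ring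
          _ = ((u'⁻¹ : Rˣ) : R) * ((u' : R) * a) := by rw [← ha, ← ha']
          _ = (((u'⁻¹ * u' : Rˣ) : R)) * a := by push_cast; ring
          _ = a := by rw [inv_mul_cancel]; simp
      rw [key, sub_self]
    have h1 : χ (u * u'⁻¹) = 1 := hχ _ hv
    rw [map_mul, map_inv] at h1
    exact mul_inv_eq_one.mp h1
end

section
/- Let π be a stationary distribution of M_R. If a, b ∈ R generate the same principal ideal, i.e. aR = bR, then π(a) = π(b). -/
open Finset

open scoped Classical

/-- The multiplication part `B_R` of the transition matrix:
`B_R(a,b) = ∑_{x ∈ R : a·x = b} β(x)`. -/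
noncomputable def Bmat (R : Type) [CommRing R] [Fintype R] (β : R → ℝ) :
    Matrix R R ℝ :=
  fun a b => ∑ x ∈ Finset.univ.filter (fun x => a * x = b), β x

/-- The transition matrix `M_R(a,b) = α/|R| + (1−α)·B_R(a,b)`. -/
noncomputable def Mmat (R : Type) [CommRing R] [Fintype R] (α : ℝ) (β : R → ℝ) :
    Matrix R R ℝ :=
  fun a b => α / (Fintype.card R : ℝ) + (1 - α) * Bmat R β a b

private lemma exists_unit_of_span_eq {R : Type} [CommRing R] [Fintype R] {a b : R}
    (hab : Ideal.span ({a} : Set R) = Ideal.span {b}) : ∃ u : Rˣ, b = a * u := by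
  have hbmem : b ∈ Ideal.span ({a} : Set R) := by
    rw [hab]; exact Ideal.mem_span_singleton_self b
  have hamem : a ∈ Ideal.span ({b} : Set R) := by
    rw [← hab]; exact Ideal.mem_span_singleton_self a
  obtain ⟨s, hs⟩ := Ideal.mem_span_singleton'.mp hbmem
  obtain ⟨t, ht⟩ := Ideal.mem_span_singleton'.mp hamem
  set f : R := s * t with hfdef
  have hfa : f * a = a := by rw [hfdef]; linear_combination t * hs + ht
  have hfb : f * b = b := by rw [hfdef]; linear_combination s * ht + hs
  -- find i < j with f^i = f^j
  obtain ⟨i, j, hne, hij⟩ := Finite.exists_ne_map_eq_of_infinite (fun n : ℕ => f ^ n)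
  wlog hlt : i < j generalizing i j
  · exact this j i hne.symm hij.symm (by omega)
  -- f^(m) = f^(m + (j-i)) for m ≥ i, in additive form:
  have hstep : ∀ r : ℕ, f ^ (i + r) = f ^ (j + r) := by
    intro r; rw [pow_add, pow_add, hij]
  have hmul : ∀ m r : ℕ, f ^ (i + r) = f ^ (i + r + m * (j - i)) := by
    intro m
    induction m with
    | zero => intro r; simp
    | succ m ih =>
      intro r
      have e0 : (m + 1) * (j - i) = m * (j - i) + (j - i) := by ring
      have e1 : i + r + (m + 1) * (j - i) = j + (r + m * (j - i)) := by rw [e0]; omega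
      rw [e1, ← hstep (r + m * (j - i)), ← Nat.add_assoc]
      exact ih r
  obtain ⟨k, hk1, h2k⟩ : ∃ k : ℕ, i + 1 ≤ k ∧ f ^ (2 * k) = f ^ k := by
    refine ⟨(i + 1) * (j - i), ?_, ?_⟩
    · have h1 : 1 ≤ j - i := by omega
      calc i + 1 = (i + 1) * 1 := by ring
      _ ≤ (i + 1) * (j - i) := Nat.mul_le_mul_left _ h1
    · have h1 : 1 ≤ j - i := by omega
      have hk : i + 1 ≤ (i + 1) * (j - i) := by
        calc i + 1 = (i + 1) * 1 := by ring
        _ ≤ (i + 1) * (j - i) := Nat.mul_le_mul_left _ h1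
      generalize hK : (i + 1) * (j - i) = K at *
      have e2 : K = i + (K - i) := by omega
      have e3 : 2 * K = i + (K - i) + (i + 1) * (j - i) := by rw [hK]; omega
      rw [e3, ← hmul (i + 1) (K - i), ← e2]
  set e : R := f ^ k with hedef
  have he : e * e = e := by
    rw [hedef, ← pow_add, show k + k = 2 * k by ring, h2k]
  have hpow : ∀ m : ℕ, f ^ m * a = a := by
    intro m
    induction m with
    | zero => simp
    | succ m ih => rw [pow_succ, mul_assoc, hfa, ih]
  have hpowb : ∀ m : ℕ, f ^ m * b = b := by
    intro m
    induction m with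
    | zero => simp
    | succ m ih => rw [pow_succ, mul_assoc, hfb, ih]
  have hae : a * e = a := by rw [hedef, mul_comm]; exact hpow k
  have hbe : b * e = b := by rw [hedef, mul_comm]; exact hpowb k
  set g : R := f ^ (k - 1) with hgdef
  have hst : s * t * g = e := by
    rw [hgdef, hedef, ← hfdef, ← pow_succ']
    congr 1
    omega
  refine ⟨⟨s * e + (1 - e), t * g * e + (1 - e), ?_, ?_⟩, ?_⟩
  · linear_combination (e + 2 - s - t * g) * he + e ^ 2 * hst
  · linear_combination (e + 2 - s - t * g) * he + e ^ 2 * hst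
  · show b = a * (s * e + (1 - e))
    linear_combination - e * hs + hae - hbe

/-- Elements generating the same principal ideal have the same stationary
probability. -/
theorem stmt13 (R : Type) [CommRing R] [Fintype R]
    (α : ℝ) (hα0 : 0 < α) (hα1 : α < 1)
    (β : R → ℝ) (hβ : ∀ x, 0 ≤ β x) (hβsum : ∑ x, β x = 1)
    (π : R → ℝ) (hπ0 : ∀ x, 0 ≤ π x) (hπsum : ∑ x, π x = 1)
    (hπstat : ∀ b : R, ∑ a : R, π a * Mmat R α β a b = π b)
    (a b : R) (hab : Ideal.span ({a} : Set R) = Ideal.span {b}) :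
    π a = π b := by
  obtain ⟨u, hu⟩ := exists_unit_of_span_eq hab
  have h1a : (0:ℝ) ≤ 1 - α := by linarith
  -- reformulated stationarity
  have key : ∀ c : R, π c = α / (Fintype.card R : ℝ)
      + (1 - α) * ∑ x : R, β x * ∑ w ∈ Finset.univ.filter (fun w => w * x = c), π w := by
    intro c
    have h := hπstat c
    rw [← h]
    simp only [Mmat, Bmat, mul_add]
    rw [Finset.sum_add_distrib]
    congr 1
    · rw [← Finset.sum_mul, hπsum, one_mul]
    · have swap : (∑ x : R, β x * ∑ w ∈ Finset.univ.filter (fun w => w * x = c), π w)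
          = ∑ w : R, π w * ∑ x ∈ Finset.univ.filter (fun x => w * x = c), β x := by
        simp_rw [Finset.mul_sum, Finset.sum_filter]
        rw [Finset.sum_comm]
        exact Finset.sum_congr rfl fun w _ => Finset.sum_congr rfl fun x _ =>
          if_congr Iff.rfl (mul_comm _ _) rfl
      symm
      rw [swap, Finset.mul_sum]
      exact Finset.sum_congr rfl fun w _ => by ring
  -- reindexing by the unit
  have shift : ∀ (x c : R), (∑ w ∈ Finset.univ.filter (fun w => w * x = c * (u:R)), π w)
      = ∑ w ∈ Finset.univ.filter (fun w => w * x = c), π (w * (u:R)) := by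
    intro x c
    refine Finset.sum_nbij' (fun w => w * ((u⁻¹ : Rˣ) : R)) (fun w => w * (u : R))
      ?_ ?_ ?_ ?_ ?_
    · intro w hw
      simp only [Finset.mem_filter, Finset.mem_univ, true_and] at hw ⊢
      rw [show w * ((u⁻¹ : Rˣ) : R) * x = w * x * ((u⁻¹ : Rˣ) : R) by ring, hw,
        mul_assoc, Units.mul_inv, mul_one]
    · intro w hw
      simp only [Finset.mem_filter, Finset.mem_univ, true_and] at hw ⊢
      rw [show w * (u:R) * x = w * x * (u:R) by ring, hw]
    · intro w _
      simp [mul_assoc]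
    · intro w _
      simp [mul_assoc]
    · intro w _
      simp [mul_assoc]
  set d : R → ℝ := fun c => π (c * (u:R)) - π c with hdd
  have hd : ∀ c : R, d c = (1 - α) * ∑ x : R, β x *
      ∑ w ∈ Finset.univ.filter (fun w => w * x = c), d w := by
    intro c
    simp only [hdd]
    rw [key (c * (u:R)), key c]
    have h1 : (∑ x : R, β x * ∑ w ∈ Finset.univ.filter (fun w => w * x = c * (u:R)), π w)
        = ∑ x : R, β x * ∑ w ∈ Finset.univ.filter (fun w => w * x = c), π (w * (u:R)) :=
      Finset.sum_congr rfl fun x _ => by rw [shift]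
    rw [h1]
    have h2 : (∑ x : R, β x * ∑ w ∈ Finset.univ.filter (fun w => w * x = c),
          (π (w * (u:R)) - π w))
        = (∑ x : R, β x * ∑ w ∈ Finset.univ.filter (fun w => w * x = c), π (w * (u:R)))
          - ∑ x : R, β x * ∑ w ∈ Finset.univ.filter (fun w => w * x = c), π w := by
      rw [← Finset.sum_sub_distrib]
      exact Finset.sum_congr rfl fun x _ => by rw [Finset.sum_sub_distrib, mul_sub]
    rw [h2]
    ring
  have habs : ∀ c : R, |d c| ≤ (1 - α) * ∑ x : R, β x *
      ∑ w ∈ Finset.univ.filter (fun w => w * x = c), |d w| := by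
    intro c
    rw [hd c, abs_mul, abs_of_nonneg h1a]
    apply mul_le_mul_of_nonneg_left _ h1a
    calc |∑ x : R, β x * ∑ w ∈ Finset.univ.filter (fun w => w * x = c), d w|
        ≤ ∑ x : R, |β x * ∑ w ∈ Finset.univ.filter (fun w => w * x = c), d w| :=
          Finset.abs_sum_le_sum_abs _ _
      _ ≤ ∑ x : R, β x * ∑ w ∈ Finset.univ.filter (fun w => w * x = c), |d w| := by
          apply Finset.sum_le_sum
          intro x _
          rw [abs_mul, abs_of_nonneg (hβ x)]
          exact mul_le_mul_of_nonneg_left (Finset.abs_sum_le_sum_abs _ _) (hβ x)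
  have fib : ∀ x : R, (∑ c : R, ∑ w ∈ Finset.univ.filter (fun w => w * x = c), |d w|)
      = ∑ w : R, |d w| :=
    fun x => Finset.sum_fiberwise Finset.univ (fun w => w * x) (fun w => |d w|)
  have hS : (∑ c : R, |d c|) ≤ (1 - α) * ∑ c : R, |d c| := by
    calc (∑ c : R, |d c|)
        ≤ ∑ c : R, (1 - α) * ∑ x : R, β x *
            ∑ w ∈ Finset.univ.filter (fun w => w * x = c), |d w| :=
          Finset.sum_le_sum fun c _ => habs c
      _ = (1 - α) * ∑ x : R, β x * ∑ w : R, |d w| := by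
          rw [← Finset.mul_sum, Finset.sum_comm]
          congr 1
          refine Finset.sum_congr rfl fun x _ => ?_
          rw [← Finset.mul_sum, fib x]
      _ = (1 - α) * ∑ c : R, |d c| := by rw [← Finset.sum_mul, hβsum, one_mul]
  have hS0 : (0:ℝ) ≤ ∑ c : R, |d c| := Finset.sum_nonneg fun c _ => abs_nonneg _
  have hSz : (∑ c : R, |d c|) = 0 := by nlinarith
  have hall : d a = 0 := by
    have := (Finset.sum_eq_zero_iff_of_nonneg (fun c _ => abs_nonneg (d c))).mp hSz a
      (Finset.mem_univ a)
    exact abs_eq_zero.mp this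
  have hda : π (a * (u:R)) - π a = 0 := hall
  rw [hu]
  linarith
end
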